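/- Assume the twisting setup: L/K is I-Galois; A is a subgroup of I that is central in P, normal in I, a nontrivial elementary abelian p-group of order p^a, and irreducible under the μ_m-action; K' is the fixed field of P; and V/K' is an A-Galois extension such that V/K is Galois with group A ⋊_ι μ_m compatibly. If V is not contained in L, then L and V are linearly disjoint over K', i.e. [LV : K'] = p^{e+a}; consequently the fixed field W of the antidiagonal A' = {(a, a⁻¹) : a ∈ A} ⊆ P × A = Gal(LV/K') satisfies [W : K] = |I| = m·p^e. -/

import Mathlib

noncomputable section

open scoped Classical

/-- A normalized discrete valuation `v` with uniformizer `π` on a finite extension `E`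
of the Laurent series field `K = k((u))`: `v` is multiplicative, satisfies the
ultrametric inequality, takes the value `1` at `π`, and extends the normalized `u`-adic
valuation `x ↦ order x` of `K` with ramification index `[E : K]` (the extension is
totally ramified since `k` is algebraically closed). -/
def ValPkg (k : Type) [Field k] (E : Type) [Field E] [Algebra (LaurentSeries k) E]
    (v : E → ℤ) (π : E) : Prop :=
  π ≠ 0 ∧ v π = 1 ∧
    (∀ x y : E, x ≠ 0 → y ≠ 0 → v (x * y) = v x + v y) ∧
    (∀ x y : E, x ≠ 0 → y ≠ 0 → x + y ≠ 0 → min (v x) (v y) ≤ v (x + y)) ∧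
    (∀ x : LaurentSeries k, x ≠ 0 →
      v (algebraMap (LaurentSeries k) E x) =
        (Module.finrank (LaurentSeries k) E : ℤ) * HahnSeries.order x)

section RamificationFiltration

variable {F E : Type*} [Field F] [Field E] [Algebra F E]

/-- The lower-numbering ramification subset `S_c = {g ∈ S | v (g π − π) ≥ c + 1}` of a
(sub)group `S` of automorphisms of a totally ramified extension with normalized
valuation `v` and uniformizer `π` (an automorphism fixing `π` lies in every `S_c`). -/
def lowRG (S : Set (E ≃ₐ[F] E)) (v : E → ℤ) (π : E) (c : ℤ) : Set (E ≃ₐ[F] E) :=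
  {g | g ∈ S ∧ (g π = π ∨ c + 1 ≤ v (g π - π))}

/-- Herbrand's function `φ(c) = ∫₀ᶜ dt/(S₀ : S_t)` at a nonnegative integer `c`,
computed as `(∑_{t=1}^{c} |S_t|)/|S₀|`. -/
def herb (S : Set (E ≃ₐ[F] E)) (v : E → ℤ) (π : E) (c : ℕ) : ℚ :=
  (∑ t ∈ Finset.Icc 1 c, ((lowRG S v π (t : ℤ)).ncard : ℚ)) / ((lowRG S v π 0).ncard : ℚ)

/-- The upper-numbering ramification subset `S^c = S_{ψ(c)}`, where `ψ` is the inverse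
Herbrand function: `S^c = S_t` for the least nonnegative integer `t` with `φ(t) ≥ c`. -/
def uppRG (S : Set (E ≃ₐ[F] E)) (v : E → ℤ) (π : E) (c : ℚ) : Set (E ≃ₐ[F] E) :=
  lowRG S v π ((sInf {t : ℕ | c ≤ herb S v π t} : ℕ) : ℤ)

end RamificationFiltration

/-- `K = k((u))` is trivially a scalar tower over itself (stated explicitly to help
instance resolution for Laurent series fields). -/
instance lsTower (k N : Type) [Field k] [Field N] [Algebra (LaurentSeries k) N] :
    IsScalarTower (LaurentSeries k) (LaurentSeries k) N :=
  IsScalarTower.of_algebraMap_eq fun _ => rfl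

/-- For intermediate fields `K' ≤ V` of an extension `N` of `K = k((u))`, the subgroup
`Gal(V/K') = {g ∈ Gal(V/K) | g fixes K' pointwise}` of `V ≃ₐ[K] V`. -/
def galRel {k N : Type} [Field k] [Field N] [Algebra (LaurentSeries k) N]
    (V K' : IntermediateField (LaurentSeries k) N) (h : K' ≤ V) :
    Subgroup (↥V ≃ₐ[LaurentSeries k] ↥V) where
  carrier := {g | ∀ (x : N) (hx : x ∈ K'), g ⟨x, h hx⟩ = ⟨x, h hx⟩}
  one_mem' := fun x hx => rfl
  mul_mem' := by
    intro g₁ g₂ h₁ h₂ x hx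
    rw [AlgEquiv.mul_apply, h₂ x hx, h₁ x hx]
  inv_mem' := by
    intro g hg x hx
    show g.symm _ = _
    exact (AlgEquiv.symm_apply_eq g).mpr (hg x hx).symm


section AuxLemmas

open Module IntermediateField

lemma aux_card_sup_inf {G : Type*} [Group G] [Finite G] (H N : Subgroup G) [N.Normal] :
    Nat.card ↥(H ⊔ N) * Nat.card ↥(H ⊓ N) = Nat.card H * Nat.card N := by
  have e1 := Subgroup.card_eq_card_quotient_mul_card_subgroup (N.subgroupOf H)
  have e2 := Subgroup.card_eq_card_quotient_mul_card_subgroup (N.subgroupOf (H ⊔ N))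
  have e3 : Nat.card (H ⧸ N.subgroupOf H)
      = Nat.card (↥(H ⊔ N) ⧸ N.subgroupOf (H ⊔ N)) :=
    Nat.card_congr (QuotientGroup.quotientInfEquivProdNormalQuotient H N).toEquiv
  have e4 : Nat.card (N.subgroupOf H) = Nat.card ↥(H ⊓ N) := by
    rw [← Subgroup.inf_subgroupOf_right N H,
      Nat.card_congr (Subgroup.subgroupOfEquivOfLe inf_le_right).toEquiv, inf_comm]
  have e5 : Nat.card (N.subgroupOf (H ⊔ N)) = Nat.card N :=
    Nat.card_congr (Subgroup.subgroupOfEquivOfLe le_sup_right).toEquiv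
  rw [e4] at e1
  rw [e5, ← e3] at e2
  rw [e2, e1]; ring

variable {F N : Type*} [Field F] [Field N] [Algebra F N]

/-- `F2` as an intermediate field of `↥E` is isomorphic to `F2`. -/
def auxFieldEquiv (E F2 : IntermediateField F N) (hle : F2 ≤ E) :
    ↥(IntermediateField.comap E.val F2) ≃ₐ[F] ↥F2 where
  toFun x := ⟨E.val x.1, x.2⟩
  invFun y := ⟨⟨y.1, hle y.2⟩, y.2⟩
  left_inv _ := rfl
  right_inv _ := rfl
  map_mul' _ _ := rfl
  map_add' _ _ := rfl
  commutes' _ := rfl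

lemma aux_finrank_comap (E F2 : IntermediateField F N) (hle : F2 ≤ E) :
    finrank F ↥(IntermediateField.comap E.val F2) = finrank F ↥F2 :=
  (auxFieldEquiv E F2 hle).toLinearEquiv.finrank_eq

lemma aux_finrank_mul_card [FiniteDimensional F N] [IsGalois F N]
    (E : IntermediateField F N) :
    finrank F ↥E * Nat.card ↥(IntermediateField.fixingSubgroup E) = finrank F N := by
  classical
  rw [IsGalois.card_fixingSubgroup_eq_finrank]
  exact Module.finrank_mul_finrank F ↥E N

lemma aux_mem_fixingSubgroup_iff (E : IntermediateField F N) (g : N ≃ₐ[F] N) :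
    g ∈ E.fixingSubgroup ↔ ∀ x ∈ E, g x = x := by
  rw [IntermediateField.fixingSubgroup, mem_fixingSubgroup_iff]
  rfl

lemma aux_mem_fixedField_iff (H : Subgroup (N ≃ₐ[F] N)) (x : N) :
    x ∈ IntermediateField.fixedField H ↔ ∀ g ∈ H, g x = x :=
  ⟨fun h g hg => h ⟨g, hg⟩, fun h g => h g.1 g.2⟩

lemma aux_mem_of_normal (E : IntermediateField F N) [Normal F ↥E] (g : N ≃ₐ[F] N)
    {x : N} (hx : x ∈ E) : g x ∈ E := by
  have h := AlgEquiv.restrictNormalHom_apply E g ⟨x, hx⟩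
  rw [← h]
  exact (AlgEquiv.restrictNormalHom ↥E g ⟨x, hx⟩).2

lemma aux_fixing_normal (E : IntermediateField F N) [Normal F ↥E] :
    E.fixingSubgroup.Normal := by
  constructor
  intro h hh g
  rw [aux_mem_fixingSubgroup_iff] at hh ⊢
  intro x hx
  have h1 : g⁻¹ x ∈ E := aux_mem_of_normal E g⁻¹ hx
  calc (g * h * g⁻¹) x = g (h (g⁻¹ x)) := rfl
  _ = g (g⁻¹ x) := by rw [hh _ h1]
  _ = x := g.apply_symm_apply x

lemma aux_fixing_antitone {E E' : IntermediateField F N} (h : E ≤ E') :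
    E'.fixingSubgroup ≤ E.fixingSubgroup := by
  intro g hg
  rw [aux_mem_fixingSubgroup_iff] at hg ⊢
  exact fun x hx => hg x (h hx)

lemma aux_fixingSubgroup_inf [FiniteDimensional F N] [IsGalois F N]
    (E E' : IntermediateField F N) :
    (E ⊓ E').fixingSubgroup = E.fixingSubgroup ⊔ E'.fixingSubgroup := by
  have h1 : IntermediateField.fixedField (E.fixingSubgroup ⊔ E'.fixingSubgroup) = E ⊓ E' := by
    apply le_antisymm
    · intro x hx
      rw [aux_mem_fixedField_iff] at hx
      have hE : x ∈ E := by
        have : x ∈ IntermediateField.fixedField E.fixingSubgroup := by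
          rw [aux_mem_fixedField_iff]; exact fun g hg => hx g (Subgroup.mem_sup_left hg)
        rwa [IsGalois.fixedField_fixingSubgroup] at this
      have hE' : x ∈ E' := by
        have : x ∈ IntermediateField.fixedField E'.fixingSubgroup := by
          rw [aux_mem_fixedField_iff]; exact fun g hg => hx g (Subgroup.mem_sup_right hg)
        rwa [IsGalois.fixedField_fixingSubgroup] at this
      exact ⟨hE, hE'⟩
    · exact (IntermediateField.le_iff_le _ _).mpr
        (sup_le (aux_fixing_antitone inf_le_left) (aux_fixing_antitone inf_le_right))
  rw [← h1, IntermediateField.fixingSubgroup_fixedField]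

lemma aux_fixingSubgroup_sup [FiniteDimensional F N] [IsGalois F N]
    (E E' : IntermediateField F N) :
    (E ⊔ E').fixingSubgroup = E.fixingSubgroup ⊓ E'.fixingSubgroup := by
  apply le_antisymm
  · exact le_inf (aux_fixing_antitone le_sup_left) (aux_fixing_antitone le_sup_right)
  · refine (IntermediateField.le_iff_le _ _).mp (sup_le ?_ ?_)
    · conv_lhs => rw [← IsGalois.fixedField_fixingSubgroup E]
      exact fun x hx g => hx ⟨g.1, g.2.1⟩
    · conv_lhs => rw [← IsGalois.fixedField_fixingSubgroup E']
      exact fun x hx g => hx ⟨g.1, g.2.2⟩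

lemma aux_res_iff (E : IntermediateField F N) [Normal F ↥E] (g : N ≃ₐ[F] N)
    (σ : ↥E ≃ₐ[F] ↥E) :
    (∀ (y : N) (hy : y ∈ E), g y = ↑(σ ⟨y, hy⟩)) ↔
      AlgEquiv.restrictNormalHom ↥E g = σ := by
  constructor
  · intro h
    ext x
    have h1 := AlgEquiv.restrictNormalHom_apply E g x
    have h2 := h x.1 x.2
    exact h1.trans h2
  · intro h y hy
    rw [← h]
    exact (AlgEquiv.restrictNormalHom_apply E g ⟨y, hy⟩).symm

lemma aux_fixing_iff_res (E : IntermediateField F N) [Normal F ↥E] (g : N ≃ₐ[F] N) :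
    g ∈ E.fixingSubgroup ↔ AlgEquiv.restrictNormalHom ↥E g = 1 := by
  rw [← aux_res_iff E g 1, aux_mem_fixingSubgroup_iff]
  constructor <;> intro h y hy
  · rw [h y hy]; rfl
  · exact h y hy

end AuxLemmas


lemma galRel_mem {k N : Type} [Field k] [Field N] [Algebra (LaurentSeries k) N]
    (V K' : IntermediateField (LaurentSeries k) N) (h : K' ≤ V)
    (g : ↥V ≃ₐ[LaurentSeries k] ↥V) :
    g ∈ galRel V K' h ↔ ∀ (x : N) (hx : x ∈ K'), g ⟨x, h hx⟩ = ⟨x, h hx⟩ := Iff.rfl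

set_option maxHeartbeats 4000000 in
set_option synthInstance.maxHeartbeats 1000000 in
private theorem twist_main
    (p m e a : ℕ) (hp : p.Prime) (hm : 0 < m) (he : 0 < e) (ha : 0 < a) (hae : a ≤ e)
    (hpm : ¬ p ∣ m)
    (k : Type) [Field k] [IsAlgClosed k] [CharP k p]
    (N : Type) [Field N] [Algebra (LaurentSeries k) N]
    [FiniteDimensional (LaurentSeries k) N] [IsGalois (LaurentSeries k) N]
    (L V K' W : IntermediateField (LaurentSeries k) N)
    [IsGalois (LaurentSeries k) ↥L] [IsGalois (LaurentSeries k) ↥V]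
    (hK'L : K' ≤ L) (hK'V : K' ≤ V)
    -- the identification Gal(L/K) = I = P ⋊_ι μ_m, internally
    (P C : Subgroup (↥L ≃ₐ[LaurentSeries k] ↥L))
    (hPcard : Nat.card P = p ^ e) (hPnormal : P.Normal)
    (hCcard : Nat.card C = m) (hCcyc : IsCyclic ↥C)
    (hPC : P ⊓ C = ⊥) (hPCtop : P ⊔ C = ⊤)
    -- K' is the fixed field of P
    (hK'fix : ∀ (x : N) (hx : x ∈ L), x ∈ K' ↔ ∀ g ∈ P, g ⟨x, hx⟩ = ⟨x, hx⟩)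
    -- the subgroup A
    (A : Subgroup (↥L ≃ₐ[LaurentSeries k] ↥L))
    (hAP : A ≤ P)
    (hAcentral : ∀ x ∈ A, ∀ g ∈ P, x * g = g * x)
    (hAnormal : A.Normal)
    (hAbot : A ≠ ⊥)
    (hAelem : ∀ x ∈ A, x ^ p = 1)
    (hAcard : Nat.card A = p ^ a)
    (hAirred : ∀ B : Subgroup (↥L ≃ₐ[LaurentSeries k] ↥L),
      B ≤ A → (∀ c ∈ C, ∀ b ∈ B, c * b * c⁻¹ ∈ B) → B = ⊥ ∨ B = A)
    -- V/K' is A-Galois (identification eV), V/K Galois with group A ⋊_ι μ_m compatibly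
    (hVrank : Module.finrank (LaurentSeries k) ↥V = m * p ^ a)
    (eV : ↥(galRel V K' hK'V) ≃* ↥A)
    (hcompat : ∀ (g : N ≃ₐ[LaurentSeries k] N) (h : ↥(galRel V K' hK'V)),
      ∃ h' : ↥(galRel V K' hK'V),
        (∀ (x : N) (hx : x ∈ V) (hgx : g x ∈ V),
          (((h' : ↥V ≃ₐ[LaurentSeries k] ↥V) ⟨g x, hgx⟩ : ↥V) : N) =
            g ((((h : ↥V ≃ₐ[LaurentSeries k] ↥V)) ⟨x, hx⟩ : N))) ∧
        ((eV h' : ↥L ≃ₐ[LaurentSeries k] ↥L) =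
          AlgEquiv.restrictNormalHom ↥L g * ↑(eV h) *
            (AlgEquiv.restrictNormalHom (F := LaurentSeries k) (K₁ := N) ↥L g)⁻¹))
    -- W is the fixed field of the antidiagonal A' = {(a, a⁻¹)} ⊆ P × A = Gal(LV/K')
    (hW : ∀ x : N, x ∈ W ↔ ∀ g : N ≃ₐ[LaurentSeries k] N,
      (∃ b : ↥A,
        (∀ (y : N) (hy : y ∈ L), g y = ↑((↑b : ↥L ≃ₐ[LaurentSeries k] ↥L) ⟨y, hy⟩)) ∧
        (∀ (y : N) (hy : y ∈ V),
          g y = ↑((↑(eV.symm b⁻¹) : ↥V ≃ₐ[LaurentSeries k] ↥V) ⟨y, hy⟩))) →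
      g x = x)
    -- V is not contained in L
    (hVL : ¬ V ≤ L) :
    Module.finrank (LaurentSeries k) ↥(L ⊔ V) = m * p ^ (e + a) ∧
    Module.finrank (LaurentSeries k) ↥W = m * p ^ e := by
    classical
  haveI := hPnormal
  have hppos : 0 < p := hp.pos
  -- degree of L over K
  have hfL : Module.finrank (LaurentSeries k) ↥L = m * p ^ e := by
    have h1 : Nat.card (↥L ≃ₐ[LaurentSeries k] ↥L) = Module.finrank (LaurentSeries k) ↥L := by
      exact IsGalois.card_aut_eq_finrank _ _
    have h2 := aux_card_sup_inf C P
    rw [sup_comm, hPCtop, inf_comm, hPC, Subgroup.card_bot, Subgroup.card_top, mul_one,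
      hCcard, hPcard] at h2
    rw [← h1, h2]
  -- K' as a subfield of L is the fixed field of P
  have hK'comap : IntermediateField.comap L.val K' = IntermediateField.fixedField P := by
    ext x
    rw [aux_mem_fixedField_iff]
    exact hK'fix x.1 x.2
  have hfK' : Module.finrank (LaurentSeries k) ↥K' = m := by
    have h0 := aux_finrank_comap L K' hK'L
    rw [hK'comap] at h0
    have h1 : Module.finrank (LaurentSeries k) ↥(IntermediateField.fixedField P) *
        Module.finrank ↥(IntermediateField.fixedField P) ↥L =
        Module.finrank (LaurentSeries k) ↥L := Module.finrank_mul_finrank _ _ _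
    rw [IntermediateField.finrank_fixedField_eq_card, hPcard,
      hfL] at h1
    rw [← h0]
    exact Nat.eq_of_mul_eq_mul_right (pow_pos hppos e) h1
  -- galRel L K' = P
  have hPgal : galRel L K' hK'L = P := by
    apply le_antisymm
    · intro σ hσ
      rw [galRel_mem] at hσ
      have h1 : σ ∈ IntermediateField.fixingSubgroup (IntermediateField.fixedField P) := by
        rw [aux_mem_fixingSubgroup_iff]
        intro y hy
        have h2 : y ∈ IntermediateField.comap L.val K' := by rw [hK'comap]; exact hy
        exact hσ y.1 h2
      rwa [IntermediateField.fixingSubgroup_fixedField] at h1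
    · intro g hg
      rw [galRel_mem]
      intro x hx
      exact (hK'fix x (hK'L hx)).mp hx g hg
  -- card of galRel V K'
  have hGRV : Nat.card ↥(galRel V K' hK'V) = p ^ a := by
    rw [Nat.card_congr eV.toEquiv, hAcard]
  -- The intersection L ⊓ V equals K'
  have hLV : L ⊓ V = K' := by
    have hTgal : (IntermediateField.comap V.val L).fixingSubgroup ≤ galRel V K' hK'V := by
      intro σ hσ
      rw [aux_mem_fixingSubgroup_iff] at hσ
      rw [galRel_mem]
      intro x hx
      exact hσ ⟨x, hK'V hx⟩ (hK'L hx)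
    have hBA : Subgroup.map A.subtype (Subgroup.map eV.toMonoidHom
        ((IntermediateField.comap V.val L).fixingSubgroup.subgroupOf (galRel V K' hK'V))) ≤ A :=
      Subgroup.map_subtype_le _
    have hBst : ∀ c ∈ C, ∀ b ∈ Subgroup.map A.subtype (Subgroup.map eV.toMonoidHom
        ((IntermediateField.comap V.val L).fixingSubgroup.subgroupOf (galRel V K' hK'V))),
        c * b * c⁻¹ ∈ Subgroup.map A.subtype (Subgroup.map eV.toMonoidHom
        ((IntermediateField.comap V.val L).fixingSubgroup.subgroupOf (galRel V K' hK'V))) := by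
      intro c hc b hb
      simp only [Subgroup.mem_map] at hb ⊢
      obtain ⟨b', ⟨h, hhS, rfl⟩, rfl⟩ := hb
      obtain ⟨g, hg⟩ := AlgEquiv.restrictNormalHom_surjective (F := LaurentSeries k)
        (K₁ := ↥L) (E := N) c
      obtain ⟨h', hh'1, hh'2⟩ := hcompat g h
      refine ⟨eV h', ⟨h', ?_, rfl⟩, ?_⟩
      · rw [Subgroup.mem_subgroupOf, aux_mem_fixingSubgroup_iff]
        intro y hy
        have hyV : (y : N) ∈ V := y.2
        have hxV : g⁻¹ ↑y ∈ V := aux_mem_of_normal V g⁻¹ hyV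
        have hxL : g⁻¹ ↑y ∈ L := aux_mem_of_normal L g⁻¹ hy
        have heq : g (g⁻¹ ↑y) = ↑y := g.apply_symm_apply ↑y
        have hgx' : g (g⁻¹ ↑y) ∈ V := by rw [heq]; exact hyV
        have h3 := hh'1 (g⁻¹ ↑y) hxV hgx'
        have hfix : ((h : ↥(galRel V K' hK'V)) : ↥V ≃ₐ[LaurentSeries k] ↥V)
            ⟨g⁻¹ ↑y, hxV⟩ = ⟨g⁻¹ ↑y, hxV⟩ := by
          have h4 := Subgroup.mem_subgroupOf.mp hhS
          rw [aux_mem_fixingSubgroup_iff] at h4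
          exact h4 ⟨g⁻¹ ↑y, hxV⟩ hxL
        rw [hfix] at h3
        have h5 : (⟨g (g⁻¹ ↑y), hgx'⟩ : ↥V) = y := Subtype.ext heq
        rw [h5] at h3
        exact Subtype.ext (by rw [h3]; exact heq)
      · exact hg ▸ hh'2
    rcases hAirred _ hBA hBst with hBbot | hBtop
    · exfalso
      apply hVL
      have hS'bot : (IntermediateField.comap V.val L).fixingSubgroup.subgroupOf
          (galRel V K' hK'V) = ⊥ := by
        have h1 : Subgroup.map eV.toMonoidHom
            ((IntermediateField.comap V.val L).fixingSubgroup.subgroupOf (galRel V K' hK'V))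
            = ⊥ :=
          (Subgroup.map_eq_bot_iff_of_injective _ (Subgroup.subtype_injective A)).mp hBbot
        exact (Subgroup.map_eq_bot_iff_of_injective _ (MulEquiv.injective eV)).mp h1
      have hTbot : (IntermediateField.comap V.val L).fixingSubgroup = ⊥ := by
        rw [eq_bot_iff]
        intro σ hσ
        have h2 : (⟨σ, hTgal hσ⟩ : ↥(galRel V K' hK'V)) ∈
            (IntermediateField.comap V.val L).fixingSubgroup.subgroupOf (galRel V K' hK'V) :=
          Subgroup.mem_subgroupOf.mpr hσ
        rw [hS'bot, Subgroup.mem_bot] at h2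
        rw [Subgroup.mem_bot]
        exact congrArg Subtype.val h2
      intro x hx
      have h3 : (⟨x, hx⟩ : ↥V) ∈ IntermediateField.comap V.val L := by
        rw [← IsGalois.fixedField_fixingSubgroup (IntermediateField.comap V.val L),
          aux_mem_fixedField_iff]
        intro g hg
        rw [hTbot, Subgroup.mem_bot] at hg
        rw [hg]
        rfl
      exact h3
    · -- B = A: galRel V ≤ fixing subgroup of L∩V in V, hence M' = K'-in-V
      have hgal_le : ∀ h : ↥(galRel V K' hK'V), (h : ↥V ≃ₐ[LaurentSeries k] ↥V) ∈
          (IntermediateField.comap V.val L).fixingSubgroup := by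
        intro h
        have h1 : (A.subtype (eV h) : ↥L ≃ₐ[LaurentSeries k] ↥L) ∈
            Subgroup.map A.subtype (Subgroup.map eV.toMonoidHom
            ((IntermediateField.comap V.val L).fixingSubgroup.subgroupOf
              (galRel V K' hK'V))) := by
          rw [hBtop]; exact (eV h).2
        simp only [Subgroup.mem_map] at h1
        obtain ⟨b', ⟨h'', hh''S, hh''e⟩, hb'⟩ := h1
        have hb'2 : b' = eV h := Subgroup.subtype_injective A hb'
        have h2 : h'' = h := MulEquiv.injective eV (hh''e.trans hb'2)
        rw [← h2]
        exact Subgroup.mem_subgroupOf.mp hh''S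
      have hTeq : (IntermediateField.comap V.val L).fixingSubgroup = galRel V K' hK'V :=
        le_antisymm hTgal (fun σ hσ => hgal_le ⟨σ, hσ⟩)
      have h3 := aux_finrank_mul_card (F := LaurentSeries k) (N := ↥V)
        (IntermediateField.comap V.val L)
      rw [hTeq, hGRV, hVrank] at h3
      have h4 : Module.finrank (LaurentSeries k) ↥(IntermediateField.comap V.val L) = m :=
        Nat.eq_of_mul_eq_mul_right (pow_pos hppos a) h3
      have h5 : Module.finrank (LaurentSeries k) ↥(IntermediateField.comap V.val K') = m := by
        rw [aux_finrank_comap V K' hK'V, hfK']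
      have h6 : IntermediateField.comap V.val K' ≤ IntermediateField.comap V.val L :=
        fun x hx => hK'L hx
      have h7 : IntermediateField.comap V.val K' = IntermediateField.comap V.val L :=
        IntermediateField.eq_of_le_of_finrank_eq h6 (by rw [h5, h4])
      apply le_antisymm
      · intro x hx
        have h8 : (⟨x, hx.2⟩ : ↥V) ∈ IntermediateField.comap V.val L := hx.1
        rw [← h7] at h8
        exact h8
      · exact le_inf hK'L hK'V
  -- fixing subgroups in Gal(N/K)
  haveI hHLnormal : (IntermediateField.fixingSubgroup L).Normal := aux_fixing_normal L
  have hnL := aux_finrank_mul_card L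
  have hnV := aux_finrank_mul_card V
  have hnK' := aux_finrank_mul_card K'
  rw [hfL] at hnL
  rw [hVrank] at hnV
  rw [hfK'] at hnK'
  have hInf : IntermediateField.fixingSubgroup K' =
      IntermediateField.fixingSubgroup L ⊔ IntermediateField.fixingSubgroup V := by
    rw [← hLV]; exact aux_fixingSubgroup_inf L V
  have hSup : IntermediateField.fixingSubgroup (L ⊔ V) =
      IntermediateField.fixingSubgroup L ⊓ IntermediateField.fixingSubgroup V :=
    aux_fixingSubgroup_sup L V
  have hc := aux_card_sup_inf (IntermediateField.fixingSubgroup V)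
    (IntermediateField.fixingSubgroup L)
  rw [sup_comm, inf_comm, ← hInf] at hc
  set n := Module.finrank (LaurentSeries k) N with hn
  set cL := Nat.card ↥(IntermediateField.fixingSubgroup L) with hcL
  set cV := Nat.card ↥(IntermediateField.fixingSubgroup V) with hcV
  set cK' := Nat.card ↥(IntermediateField.fixingSubgroup K') with hcK'
  set cI := Nat.card ↥(IntermediateField.fixingSubgroup L ⊓ IntermediateField.fixingSubgroup V)
    with hcI
  have hnpos : 0 < n := Module.finrank_pos
  clear_value n cL cV cK' cI
  have h7 := aux_finrank_mul_card (L ⊔ V)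
  rw [hSup, ← hcI, ← hn] at h7
  have hcIpos : 0 < cI := by
    rcases Nat.eq_zero_or_pos cI with h | h
    · rw [h, mul_zero] at h7; omega
    · exact h
  have key : n = m * p ^ (e + a) * cI := by
    have h6 : n * n = n * (m * p ^ (e + a) * cI) := by
      calc n * n = ((m * p ^ e) * cL) * ((m * p ^ a) * cV) := by rw [hnL, hnV]
      _ = (m * p ^ (e + a)) * (m * (cV * cL)) := by rw [pow_add]; ring
      _ = (m * p ^ (e + a)) * (m * (cK' * cI)) := by rw [← hc]
      _ = (m * p ^ (e + a)) * ((m * cK') * cI) := by ring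
      _ = n * (m * p ^ (e + a) * cI) := by rw [hnK']; ring
    exact Nat.eq_of_mul_eq_mul_left hnpos h6
  refine ⟨?_, ?_⟩
  · rw [key] at h7
    exact Nat.eq_of_mul_eq_mul_right hcIpos h7
  
  -- Part 2: the fixed field W of the antidiagonal
  have hAcomm : ∀ b₁ b₂ : ↥A, b₁ * b₂ = b₂ * b₁ := fun b₁ b₂ =>
    Subtype.ext (hAcentral b₁ b₁.2 b₂ (hAP b₂.2))
  obtain ⟨D, hDmem⟩ : ∃ D : Subgroup (N ≃ₐ[LaurentSeries k] N),
      ∀ g, g ∈ D ↔ ∃ b : ↥A,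
        AlgEquiv.restrictNormalHom ↥L g = ↑b ∧
        AlgEquiv.restrictNormalHom ↥V g =
          ↑(eV.symm b⁻¹) := by
    refine ⟨⟨⟨⟨{g | ∃ b : ↥A,
        AlgEquiv.restrictNormalHom ↥L g = ↑b ∧
        AlgEquiv.restrictNormalHom ↥V g = ↑(eV.symm b⁻¹)}, ?_⟩, ?_⟩, ?_⟩, fun g => Iff.rfl⟩
    · rintro g₁ g₂ ⟨b₁, hL₁, hV₁⟩ ⟨b₂, hL₂, hV₂⟩
      refine ⟨b₁ * b₂, ?_, ?_⟩
      · rw [map_mul, hL₁, hL₂]; rfl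
      · rw [map_mul, hV₁, hV₂]
        have h8 : (b₁ * b₂)⁻¹ = b₁⁻¹ * b₂⁻¹ := by rw [mul_inv_rev, hAcomm]
        rw [h8, map_mul]
        rfl
    · exact ⟨1, by simp, by simp⟩
    · rintro g ⟨b, hL1, hV1⟩
      refine ⟨b⁻¹, ?_, ?_⟩
      · rw [map_inv, hL1]; rfl
      · rw [map_inv, hV1, inv_inv, ← InvMemClass.coe_inv, ← map_inv, inv_inv]
  have hWD : W = IntermediateField.fixedField D := by
    ext x
    rw [hW x, aux_mem_fixedField_iff]
    refine forall_congr' fun g => imp_congr ?_ Iff.rfl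
    rw [hDmem g]
    constructor
    · rintro ⟨b, h1, h2⟩
      exact ⟨b, (aux_res_iff L g ↑b).mp h1, (aux_res_iff V g _).mp h2⟩
    · rintro ⟨b, h1, h2⟩
      exact ⟨b, (aux_res_iff L g ↑b).mpr h1, (aux_res_iff V g _).mpr h2⟩
  have huniq : ∀ (g : N ≃ₐ[LaurentSeries k] N) (b b' : ↥A),
      AlgEquiv.restrictNormalHom ↥L g = ↑b →
      AlgEquiv.restrictNormalHom ↥L g = ↑b' → b = b' := by
    intro g b b' h1 h2
    exact Subtype.ext (h1.symm.trans h2 :)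
  have hmemD : ∀ g : ↥D, ∃ b : ↥A,
      AlgEquiv.restrictNormalHom ↥L (g : N ≃ₐ[LaurentSeries k] N) = ↑b ∧
      AlgEquiv.restrictNormalHom ↥V (g : N ≃ₐ[LaurentSeries k] N) = ↑(eV.symm b⁻¹) :=
    fun g => (hDmem _).mp g.2
  obtain ⟨φ, hφspec⟩ : ∃ φ : ↥D →* ↥A, ∀ g : ↥D,
      AlgEquiv.restrictNormalHom ↥L (g : N ≃ₐ[LaurentSeries k] N) = ↑(φ g) ∧
      AlgEquiv.restrictNormalHom ↥V (g : N ≃ₐ[LaurentSeries k] N) = ↑(eV.symm (φ g)⁻¹) := by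
    refine ⟨{ toFun := fun g => (hmemD g).choose, map_one' := ?_, map_mul' := ?_ },
      fun g => (hmemD g).choose_spec⟩
    · refine huniq 1 _ _ (hmemD 1).choose_spec.1 ?_
      simp
    · intro g₁ g₂
      refine huniq ↑(g₁ * g₂) _ _ (hmemD (g₁ * g₂)).choose_spec.1 ?_
      have h1 := (hmemD g₁).choose_spec.1
      have h2 := (hmemD g₂).choose_spec.1
      rw [Subgroup.coe_mul, map_mul]
      exact (congrArg₂ (· * ·) h1 h2).trans rfl
  have hφker : ∀ g : ↥D, φ g = 1 ↔ (g : N ≃ₐ[LaurentSeries k] N) ∈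
      IntermediateField.fixingSubgroup L ⊓ IntermediateField.fixingSubgroup V := by
    intro g
    constructor
    · intro h
      have hs := hφspec g
      rw [h] at hs
      refine ⟨(aux_fixing_iff_res L ↑g).mpr ?_, (aux_fixing_iff_res V ↑g).mpr ?_⟩
      · rw [hs.1]; simp
      · rw [hs.2]; simp
    · intro h
      refine huniq ↑g _ _ (hφspec g).1 ?_
      rw [(aux_fixing_iff_res L ↑g).mp h.1]
      simp
  have hφsur : Function.Surjective φ := by
    intro b
    obtain ⟨g, hg1, hg2⟩ : ∃ g : N ≃ₐ[LaurentSeries k] N,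
        AlgEquiv.restrictNormalHom ↥L g = ↑b ∧
        AlgEquiv.restrictNormalHom ↥V g = ↑(eV.symm b⁻¹) := by
      set ρ : ↥(IntermediateField.fixingSubgroup K') →*
          (↥L ≃ₐ[LaurentSeries k] ↥L) × (↥V ≃ₐ[LaurentSeries k] ↥V) :=
        ((AlgEquiv.restrictNormalHom ↥L).prod (AlgEquiv.restrictNormalHom ↥V)).comp
          (IntermediateField.fixingSubgroup K').subtype with hρdef
      have hrange_le : ρ.range ≤ (galRel L K' hK'L).prod (galRel V K' hK'V) := by
        rintro x ⟨g, rfl⟩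
        have hgK' := (aux_mem_fixingSubgroup_iff K' (↑g : N ≃ₐ[LaurentSeries k] N)).mp g.2
        rw [Subgroup.mem_prod]
        constructor
        · show AlgEquiv.restrictNormalHom ↥L (↑g : N ≃ₐ[LaurentSeries k] N) ∈ galRel L K' hK'L
          rw [galRel_mem]
          intro x hx
          apply Subtype.ext
          rw [AlgEquiv.restrictNormalHom_apply]
          exact hgK' x hx
        · show AlgEquiv.restrictNormalHom ↥V (↑g : N ≃ₐ[LaurentSeries k] N) ∈ galRel V K' hK'V
          rw [galRel_mem]
          intro x hx
          apply Subtype.ext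
          rw [AlgEquiv.restrictNormalHom_apply]
          exact hgK' x hx
      have hker : ρ.ker = (IntermediateField.fixingSubgroup L ⊓
          IntermediateField.fixingSubgroup V).subgroupOf
          (IntermediateField.fixingSubgroup K') := by
        ext g
        rw [MonoidHom.mem_ker, Subgroup.mem_subgroupOf]
        constructor
        · intro h
          exact ⟨(aux_fixing_iff_res L ↑g).mpr (congrArg Prod.fst h),
            (aux_fixing_iff_res V ↑g).mpr (congrArg Prod.snd h)⟩
        · intro h
          have hL1 := (aux_fixing_iff_res L (↑g : N ≃ₐ[LaurentSeries k] N)).mp h.1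
          have hV1 := (aux_fixing_iff_res V (↑g : N ≃ₐ[LaurentSeries k] N)).mp h.2
          exact Prod.ext hL1 hV1
      have hsub_le : IntermediateField.fixingSubgroup L ⊓ IntermediateField.fixingSubgroup V ≤
          IntermediateField.fixingSubgroup K' :=
        le_trans inf_le_left (aux_fixing_antitone hK'L)
      have h1 := Subgroup.card_eq_card_quotient_mul_card_subgroup ρ.ker
      rw [Nat.card_congr (QuotientGroup.quotientKerEquivRange ρ).toEquiv, hker,
        Nat.card_congr (Subgroup.subgroupOfEquivOfLe hsub_le).toEquiv] at h1
      have h2 : cK' = p ^ (e + a) * cI := by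
        have h3 := hnK'
        rw [key] at h3
        refine Nat.eq_of_mul_eq_mul_left hm ?_
        rw [h3]; ring
      have h4 : Nat.card ↥((galRel L K' hK'L).prod (galRel V K' hK'V)) = p ^ (e + a) := by
        rw [Nat.card_congr (Subgroup.prodEquiv _ _).toEquiv, Nat.card_prod, hPgal, hPcard,
          hGRV, pow_add]
      rw [← hcI, ← hcK'] at h1
      have h5 : Nat.card ↥ρ.range = p ^ (e + a) := by
        refine Nat.eq_of_mul_eq_mul_right hcIpos ?_
        rw [← h1]
        exact h2
      have hrange_eq : ρ.range = (galRel L K' hK'L).prod (galRel V K' hK'V) := by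
        refine Subgroup.eq_of_le_of_card_ge hrange_le ?_
        rw [h4, h5]
      have hmem : ((↑b, ↑(eV.symm b⁻¹)) :
          (↥L ≃ₐ[LaurentSeries k] ↥L) × (↥V ≃ₐ[LaurentSeries k] ↥V)) ∈
          (galRel L K' hK'L).prod (galRel V K' hK'V) := by
        rw [Subgroup.mem_prod]
        exact ⟨by rw [hPgal]; exact hAP b.2, (eV.symm b⁻¹).2⟩
      rw [← hrange_eq] at hmem
      obtain ⟨g, hg⟩ := hmem
      exact ⟨↑g, congrArg Prod.fst hg, congrArg Prod.snd hg⟩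
    have hgD : g ∈ D := (hDmem g).mpr ⟨b, hg1, hg2⟩
    exact ⟨⟨g, hgD⟩, huniq g _ _ (hφspec ⟨g, hgD⟩).1 hg1⟩
  have hkerEq : φ.ker = (IntermediateField.fixingSubgroup L ⊓
      IntermediateField.fixingSubgroup V).subgroupOf D := by
    ext g
    rw [MonoidHom.mem_ker, Subgroup.mem_subgroupOf]
    exact hφker g
  have hIble : IntermediateField.fixingSubgroup L ⊓ IntermediateField.fixingSubgroup V ≤ D := by
    intro g hg
    rw [hDmem g]
    refine ⟨1, ?_, ?_⟩
    · rw [(aux_fixing_iff_res L g).mp hg.1]; simp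
    · rw [(aux_fixing_iff_res V g).mp hg.2]; simp
  have hcardD : Nat.card ↥D = p ^ a * cI := by
    have h1 := Subgroup.card_eq_card_quotient_mul_card_subgroup φ.ker
    rw [Nat.card_congr (QuotientGroup.quotientKerEquivOfSurjective φ hφsur).toEquiv, hkerEq,
      Nat.card_congr (Subgroup.subgroupOfEquivOfLe hIble).toEquiv] at h1
    rw [h1, hAcard, ← hcI]
  -- final computation
  have hfixW : IntermediateField.fixingSubgroup W = D := by
    rw [hWD]; exact IntermediateField.fixingSubgroup_fixedField D
  have h1 := aux_finrank_mul_card W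
  rw [hfixW, hcardD, ← hn, key] at h1
  have h3 : m * p ^ (e + a) * cI = (m * p ^ e) * (p ^ a * cI) := by rw [pow_add]; ring
  rw [h3] at h1
  exact Nat.eq_of_mul_eq_mul_right (Nat.mul_pos (pow_pos hppos a) hcIpos) h1

set_option maxHeartbeats 1000000 in
set_option synthInstance.maxHeartbeats 1000000 in
/-- **Connectedness of the twist.**  In the twisting setup (`L/K` an `I`-Galois
extension, `I = P ⋊_ι μ_m` internally with `|P| = p^e` and `|C| = m`; `A` a subgroup
of `I` central in `P`, normal in `I`, nontrivial elementary abelian of order `p^a`,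
irreducible under the `μ_m`-action; `K'` the fixed field of `P`; `V/K'` an `A`-Galois
extension, identification `eV`, such that `V/K` is Galois with group `A ⋊_ι μ_m`
compatibly), if `V` is not contained in `L`, then `L` and `V` are linearly disjoint
over `K'`, i.e. `[LV : K'] = p^{e+a}` (equivalently `[LV : K] = m·p^{e+a}`);
consequently the fixed field `W` of the antidiagonal
`A' = {(a, a⁻¹) : a ∈ A} ⊆ P × A = Gal(LV/K')` satisfies `[W : K] = |I| = m·p^e`. -/
theorem twist_connected_of_not_dominated
    (p m e a : ℕ) (hp : p.Prime) (hm : 0 < m) (he : 0 < e) (ha : 0 < a) (hae : a ≤ e)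
    (hpm : ¬ p ∣ m)
    (k : Type) [Field k] [IsAlgClosed k] [CharP k p]
    (N : Type) [Field N] [Algebra (LaurentSeries k) N]
    [FiniteDimensional (LaurentSeries k) N] [IsGalois (LaurentSeries k) N]
    (L V K' W : IntermediateField (LaurentSeries k) N)
    [IsGalois (LaurentSeries k) ↥L] [IsGalois (LaurentSeries k) ↥V]
    (hK'L : K' ≤ L) (hK'V : K' ≤ V)
    -- the identification Gal(L/K) = I = P ⋊_ι μ_m, internally
    (P C : Subgroup (↥L ≃ₐ[LaurentSeries k] ↥L))
    (hPcard : Nat.card P = p ^ e) (hPnormal : P.Normal)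
    (hCcard : Nat.card C = m) (hCcyc : IsCyclic ↥C)
    (hPC : P ⊓ C = ⊥) (hPCtop : P ⊔ C = ⊤)
    -- K' is the fixed field of P
    (hK'fix : ∀ (x : N) (hx : x ∈ L), x ∈ K' ↔ ∀ g ∈ P, g ⟨x, hx⟩ = ⟨x, hx⟩)
    -- the subgroup A
    (A : Subgroup (↥L ≃ₐ[LaurentSeries k] ↥L))
    (hAP : A ≤ P)
    (hAcentral : ∀ x ∈ A, ∀ g ∈ P, x * g = g * x)
    (hAnormal : A.Normal)
    (hAbot : A ≠ ⊥)
    (hAelem : ∀ x ∈ A, x ^ p = 1)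
    (hAcard : Nat.card A = p ^ a)
    (hAirred : ∀ B : Subgroup (↥L ≃ₐ[LaurentSeries k] ↥L),
      B ≤ A → (∀ c ∈ C, ∀ b ∈ B, c * b * c⁻¹ ∈ B) → B = ⊥ ∨ B = A)
    -- V/K' is A-Galois (identification eV), V/K Galois with group A ⋊_ι μ_m compatibly
    (hVrank : Module.finrank (LaurentSeries k) ↥V = m * p ^ a)
    (eV : ↥(galRel V K' hK'V) ≃* ↥A)
    (hcompat : ∀ (g : N ≃ₐ[LaurentSeries k] N) (h : ↥(galRel V K' hK'V)),
      ∃ h' : ↥(galRel V K' hK'V),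
        (∀ (x : N) (hx : x ∈ V) (hgx : g x ∈ V),
          (((h' : ↥V ≃ₐ[LaurentSeries k] ↥V) ⟨g x, hgx⟩ : ↥V) : N) =
            g ((((h : ↥V ≃ₐ[LaurentSeries k] ↥V)) ⟨x, hx⟩ : N))) ∧
        ((eV h' : ↥L ≃ₐ[LaurentSeries k] ↥L) =
          AlgEquiv.restrictNormalHom ↥L g * ↑(eV h) *
            (AlgEquiv.restrictNormalHom (F := LaurentSeries k) (K₁ := N) ↥L g)⁻¹))
    -- W is the fixed field of the antidiagonal A' = {(a, a⁻¹)} ⊆ P × A = Gal(LV/K')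
    (hW : ∀ x : N, x ∈ W ↔ ∀ g : N ≃ₐ[LaurentSeries k] N,
      (∃ b : ↥A,
        (∀ (y : N) (hy : y ∈ L), g y = ↑((↑b : ↥L ≃ₐ[LaurentSeries k] ↥L) ⟨y, hy⟩)) ∧
        (∀ (y : N) (hy : y ∈ V),
          g y = ↑((↑(eV.symm b⁻¹) : ↥V ≃ₐ[LaurentSeries k] ↥V) ⟨y, hy⟩))) →
      g x = x)
    -- V is not contained in L
    (hVL : ¬ V ≤ L) :
    Module.finrank (LaurentSeries k) ↥(L ⊔ V) = m * p ^ (e + a) ∧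
    Module.finrank (LaurentSeries k) ↥W = m * p ^ e := by
  exact twist_main p m e a hp hm he ha hae hpm k N L V K' W hK'L hK'V P C hPcard hPnormal
    hCcard hCcyc hPC hPCtop hK'fix A hAP hAcentral hAnormal hAbot hAelem hAcard hAirred
    hVrank eV hcompat hW hVL
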